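/- Suppose the p-adic Newton polygon of f ∈ ℚ_p[x] consists of N segments with slopes s_1 < ⋯ < s_N, and suppose g ∈ ℤ_p[x] is p^r-pure of degree d with |s_i| < r for all i. Then the Newton polygon of f ∘ g has exactly N segments, with slopes s_1/d < ⋯ < s_N/d. Moreover, if the vertices of NP_p(f) are (i_j, m_j) for 0 ≤ j ≤ N, then the vertices of NP_p(f ∘ g) are (d·i_j, m_j). -/

import Mathlib

/-- The lower convex hull of a set of points in `ℝ × (ℝ ∪ {∞})`: the points lying
within the vertical strip spanned by `S` and on or above every affine lower bound of `S`. -/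
def LCH (S : Set (ℝ × EReal)) : Set (ℝ × EReal) :=
  {q | (∃ s ∈ S, s.1 ≤ q.1) ∧ (∃ s ∈ S, q.1 ≤ s.1) ∧
    ∀ a b : ℝ, (∀ s ∈ S, ((a * s.1 + b : ℝ) : EReal) ≤ s.2) →
      ((a * q.1 + b : ℝ) : EReal) ≤ q.2}
open Polynomial

/- The `p`-adic valuation of an element of `ℚ_[p]`, with `ord_p 0 = ∞`. -/
open Classical in
noncomputable def ordp (p : ℕ) [Fact p.Prime] (x : ℚ_[p]) : EReal :=
  if x = 0 then ⊤ else ((x.valuation : ℝ) : EReal)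

/-- The points `(i, ord_p a_i)` attached to a polynomial `f = Σ a_i x^i` over `ℚ_[p]`. -/
def NPpts {p : ℕ} [Fact p.Prime] (f : Polynomial ℚ_[p]) : Set (ℝ × EReal) :=
  {q | ∃ i : ℕ, i ≤ f.natDegree ∧ q = ((i : ℝ), ordp p (f.coeff i))}

/-- The `p`-adic Newton polygon of `f`, as a region in the plane. -/
noncomputable def NP {p : ℕ} [Fact p.Prime] (f : Polynomial ℚ_[p]) : Set (ℝ × EReal) :=
  LCH (NPpts f)

/-- `f` is pure at `p` of slope `s`: its Newton polygon is the single segment from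
`(0, ord_p a_0)` to `(natDegree f, ord_p a_0 + s · natDegree f)`. -/
def IsPure {p : ℕ} [Fact p.Prime] (f : Polynomial ℚ_[p]) (s : ℝ) : Prop :=
  f.coeff 0 ≠ 0 ∧
  (∀ i ≤ f.natDegree,
    ((((f.coeff 0).valuation : ℝ) + s * i : ℝ) : EReal) ≤ ordp p (f.coeff i)) ∧
  ordp p (f.coeff f.natDegree)
    = ((((f.coeff 0).valuation : ℝ) + s * f.natDegree : ℝ) : EReal)

/-- `f` is `p^r`-pure: one segment, `ord_p a_0 = r` and `ord_p a_n = 0`. -/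
def IsPrPure {p : ℕ} [Fact p.Prime] (f : Polynomial ℚ_[p]) (r : ℕ) : Prop :=
  1 ≤ f.natDegree ∧ (f.coeff 0).valuation = (r : ℤ) ∧
  IsPure f (-(r : ℝ) / f.natDegree)

/-- The Newton polygon of `f` has exactly `N` segments, with vertices `(x j, y j)`:
the `x j` are strictly increasing from `0` to `deg f`, the valuations of the coefficients
at the vertices are the `y j`, the consecutive slopes are strictly increasing, and all
points `(i, ord_p a_i)` lie on or above the segment through the neighbouring vertices. -/
def HasNPVertices {p : ℕ} [Fact p.Prime] (f : Polynomial ℚ_[p]) (N : ℕ)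
    (x : Fin (N + 1) → ℕ) (y : Fin (N + 1) → ℝ) : Prop :=
  x 0 = 0 ∧ x (Fin.last N) = f.natDegree ∧
  (∀ j : Fin N, x j.castSucc < x j.succ) ∧
  StrictMono (fun j : Fin N =>
    (y j.succ - y j.castSucc) / ((x j.succ : ℝ) - (x j.castSucc : ℝ))) ∧
  (∀ j : Fin (N + 1), ordp p (f.coeff (x j)) = ((y j : ℝ) : EReal)) ∧
  (∀ j : Fin N, ∀ i : ℕ, x j.castSucc ≤ i → i ≤ x j.succ →
    (((y j.castSucc +
        (y j.succ - y j.castSucc) / ((x j.succ : ℝ) - (x j.castSucc : ℝ))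
          * ((i : ℝ) - (x j.castSucc : ℝ))) : ℝ) : EReal) ≤ ordp p (f.coeff i))

section NPhelpers

variable {p : ℕ} [Fact p.Prime]

lemma np_rpow_eq_rpow_iff {b : ℝ} (hb : 1 < b) {u v : ℝ} : b ^ u = b ^ v ↔ u = v := by
  constructor
  · intro h
    have h1 : b ^ u ≤ b ^ v := h.le
    have h2 : b ^ v ≤ b ^ u := h.ge
    rw [Real.rpow_le_rpow_left_iff hb] at h1 h2
    linarith
  · rintro rfl; rfl

lemma np_ordp_le_iff (c : ℝ) (x : ℚ_[p]) :
    ((c : ℝ) : EReal) ≤ ordp p x ↔ ‖x‖ ≤ (p : ℝ) ^ (-c) := by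
  have hp1 : (1 : ℝ) < p := Nat.one_lt_cast.mpr (Fact.out : p.Prime).one_lt
  unfold ordp
  split_ifs with h
  · simp [h, le_top]
    exact (Real.rpow_pos_of_pos (by positivity) _).le
  · rw [EReal.coe_le_coe_iff, Padic.norm_eq_zpow_neg_valuation h,
      ← Real.rpow_intCast (p:ℝ) (-x.valuation),
      Real.rpow_le_rpow_left_iff hp1]
    push_cast
    constructor <;> intro <;> linarith

lemma np_ordp_eq_iff (c : ℝ) (x : ℚ_[p]) :
    ordp p x = ((c : ℝ) : EReal) ↔ ‖x‖ = (p : ℝ) ^ (-c) := by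
  have hp1 : (1 : ℝ) < p := Nat.one_lt_cast.mpr (Fact.out : p.Prime).one_lt
  unfold ordp
  split_ifs with h
  · simp only [h, norm_zero]
    constructor
    · intro hh; exact absurd hh (fun hh => (EReal.top_ne_coe c) hh)
    · intro hh; exact absurd hh.symm (ne_of_gt (Real.rpow_pos_of_pos (by positivity) _))
  · rw [EReal.coe_eq_coe_iff, Padic.norm_eq_zpow_neg_valuation h,
      ← Real.rpow_intCast (p:ℝ) (-x.valuation), np_rpow_eq_rpow_iff hp1]
    push_cast
    constructor <;> intro <;> linarith

lemma np_ultra_sum_le {ι : Type*} {s : Finset ι} {f : ι → ℚ_[p]} {c : ℝ} (hc : 0 ≤ c)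
    (h : ∀ i ∈ s, ‖f i‖ ≤ c) : ‖∑ i ∈ s, f i‖ ≤ c := by
  rcases s.eq_empty_or_nonempty with rfl | hs
  · simpa using hc
  · obtain ⟨i, hi, hle⟩ := Finset.le_sup'_iff (f := fun i => ‖f i‖) hs |>.mp
      (hs.norm_sum_le_sup'_norm f)
    exact hle.trans (h i hi)

lemma np_ultra_sum_lt {ι : Type*} {s : Finset ι} {f : ι → ℚ_[p]} {c : ℝ} (hc : 0 < c)
    (h : ∀ i ∈ s, ‖f i‖ < c) : ‖∑ i ∈ s, f i‖ < c := by
  rcases s.eq_empty_or_nonempty with rfl | hs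
  · simpa using hc
  · obtain ⟨i, hi, hle⟩ := Finset.le_sup'_iff (f := fun i => ‖f i‖) hs |>.mp
      (hs.norm_sum_le_sup'_norm f)
    exact hle.trans_lt (h i hi)

lemma np_norm_add_of_lt {a b : ℚ_[p]} (h : ‖b‖ < ‖a‖) : ‖a + b‖ = ‖a‖ := by
  rw [Padic.add_eq_max_of_ne (ne_of_gt h), max_eq_left h.le]

lemma np_pow_coeff_le (g : Polynomial ℚ_[p]) (c e : ℝ)
    (hb : ∀ i : ℕ, ‖g.coeff i‖ ≤ (p : ℝ) ^ (e * i - c)) :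
    ∀ k m : ℕ, ‖(g ^ k).coeff m‖ ≤ (p : ℝ) ^ (e * m - k * c) := by
  have hp0 : (0 : ℝ) < p := by exact_mod_cast (Fact.out : p.Prime).pos
  intro k
  induction k with
  | zero =>
    intro m
    rcases Nat.eq_zero_or_pos m with rfl | hm
    · simp [Real.rpow_zero]
    · rw [pow_zero, Polynomial.coeff_one, if_neg (by omega)]
      simpa using (Real.rpow_pos_of_pos hp0 _).le
  | succ k ih =>
    intro m
    rw [pow_succ, Polynomial.coeff_mul]
    apply np_ultra_sum_le (Real.rpow_pos_of_pos hp0 _).le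
    intro q hq
    rw [Finset.HasAntidiagonal.mem_antidiagonal] at hq
    calc ‖(g ^ k).coeff q.1 * g.coeff q.2‖
        = ‖(g ^ k).coeff q.1‖ * ‖g.coeff q.2‖ := norm_mul _ _
      _ ≤ (p : ℝ) ^ (e * q.1 - k * c) * (p : ℝ) ^ (e * q.2 - c) :=
          mul_le_mul (ih q.1) (hb q.2) (norm_nonneg _)
            (Real.rpow_pos_of_pos hp0 _).le
      _ = (p : ℝ) ^ (e * m - (k + 1 : ℕ) * c) := by
          rw [← Real.rpow_add hp0]
          congr 1
          have : (q.1 : ℝ) + q.2 = m := by exact_mod_cast congrArg Nat.cast hq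
          push_cast [← this]
          ring

end NPhelpers

/-- Main theorem: if the Newton polygon of `f` has `N` segments with slopes `s_1 < ⋯ < s_N`
(vertices `(x j, y j)`), each satisfying `|s_j| < r`, and `g ∈ ℤ_p[x]` is `p^r`-pure of
degree `d`, then the Newton polygon of `f ∘ g` has exactly `N` segments, with vertices
`(d · x j, y j)` (hence slopes `s_1/d < ⋯ < s_N/d`). -/
theorem np_comp_stretch (p : ℕ) [Fact p.Prime] (r : ℕ) (hr : 1 ≤ r)
    (f g : Polynomial ℚ_[p]) (N : ℕ) (hN : 1 ≤ N)
    (x : Fin (N + 1) → ℕ) (y : Fin (N + 1) → ℝ)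
    (hf : HasNPVertices f N x y)
    (hs : ∀ j : Fin N,
      |(y j.succ - y j.castSucc) / ((x j.succ : ℝ) - (x j.castSucc : ℝ))| < r)
    (hgint : ∀ i, ‖g.coeff i‖ ≤ 1) (hg : IsPrPure g r) :
    HasNPVertices (f.comp g) N (fun j => g.natDegree * x j) y := by
  obtain ⟨hx0, hxN, hxlt, hslt0, hvert, hseg⟩ := hf
  obtain ⟨hd1, hval0, hg0ne, hgpure, hglead⟩ := hg
  set d := g.natDegree with hd
  set n := f.natDegree with hn
  have hppr : p.Prime := Fact.out
  have hp0 : (0:ℝ) < p := by exact_mod_cast hppr.pos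
  have hp1 : (1:ℝ) < p := by exact_mod_cast hppr.one_lt
  have hdpos : (0:ℝ) < d := by exact_mod_cast hd1
  have hxmono : StrictMono x := Fin.strictMono_iff_lt_succ.mpr hxlt
  set s : Fin N → ℝ :=
    fun j => (y j.succ - y j.castSucc) / ((x j.succ : ℝ) - (x j.castSucc : ℝ)) with hsdef
  have hden : ∀ j : Fin N, (0:ℝ) < (x j.succ : ℝ) - (x j.castSucc : ℝ) := fun j =>
    sub_pos.mpr (by exact_mod_cast hxlt j)
  have hkey : ∀ j : Fin N, s j * ((x j.succ : ℝ) - (x j.castSucc : ℝ))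
      = y j.succ - y j.castSucc := fun j => div_mul_cancel₀ _ (hden j).ne'
  have hslt : StrictMono s := hslt0
  -- Lemma A : lines below the polygon, right-hand version
  have hA : ∀ m : ℕ, ∀ j1 j2 : Fin N, j1.val + m = j2.val → ∀ t : ℝ,
      (x j2.castSucc : ℝ) ≤ t →
      y j1.castSucc + s j1 * (t - (x j1.castSucc : ℝ))
        ≤ y j2.castSucc + s j2 * (t - (x j2.castSucc : ℝ)) := by
    intro m
    induction m with
    | zero =>
      intro j1 j2 h t _
      have : j1 = j2 := Fin.ext (by omega)
      subst this; exact le_refl _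
    | succ m ih =>
      intro j1 j2 hsum t ht
      have hj2 : 0 < j2.val := by omega
      set j2' : Fin N := ⟨j2.val - 1, by omega⟩ with hj2'
      have hadj : j2'.succ = j2.castSucc := Fin.ext (by simp [hj2']; try omega)
      have hxx : (x j2'.succ : ℝ) = (x j2.castSucc : ℝ) := by rw [hadj]
      have hyy : y j2'.succ = y j2.castSucc := by rw [hadj]
      have hsle : s j2' < s j2 := hslt (show j2' < j2 by
        rw [Fin.lt_def]; simp [hj2']; try omega)
      have hxcc : (x j2'.castSucc : ℝ) ≤ (x j2.castSucc : ℝ) := by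
        have : j2'.castSucc ≤ j2.castSucc := by
          rw [Fin.le_def]; simp [hj2']; try omega
        exact_mod_cast Nat.cast_le.mpr (hxmono.monotone this)
      have h1 := ih j1 j2' (by simp [hj2']; try omega) t (le_trans hxcc ht)
      have h2 : y j2'.castSucc + s j2' * (t - (x j2'.castSucc : ℝ))
          = y j2.castSucc + s j2' * (t - (x j2.castSucc : ℝ)) := by
        rw [← hyy, ← hxx]
        linear_combination hkey j2'
      have h3 : y j2.castSucc + s j2' * (t - (x j2.castSucc : ℝ))
          ≤ y j2.castSucc + s j2 * (t - (x j2.castSucc : ℝ)) := by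
        have h4 := sub_nonneg.mpr ht
        nlinarith
      linarith
  -- Lemma B : left-hand version
  have hB : ∀ m : ℕ, ∀ j1 j2 : Fin N, j1.val + m = j2.val → ∀ t : ℝ,
      t ≤ (x j1.succ : ℝ) →
      y j2.castSucc + s j2 * (t - (x j2.castSucc : ℝ))
        ≤ y j1.castSucc + s j1 * (t - (x j1.castSucc : ℝ)) := by
    intro m
    induction m with
    | zero =>
      intro j1 j2 h t _
      have : j1 = j2 := Fin.ext (by omega)
      subst this; exact le_refl _
    | succ m ih =>
      intro j1 j2 hsum t ht
      have hj1 : j1.val + 1 < N := by omega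
      set j1' : Fin N := ⟨j1.val + 1, hj1⟩ with hj1'
      have hadj : j1'.castSucc = j1.succ := Fin.ext (by simp [hj1']; try omega)
      have hsle : s j1 < s j1' := hslt (show j1 < j1' by
        rw [Fin.lt_def]; simp [hj1'])
      have hxcc : (x j1'.castSucc : ℝ) ≤ (x j1'.succ : ℝ) := by
        exact_mod_cast Nat.cast_le.mpr (hxmono.monotone (Fin.castSucc_le_succ j1'))
      have h1 := ih j1' j2 (by simp [hj1']; try omega) t (by rw [hadj] at hxcc; linarith)
      have h2 : y j1'.castSucc + s j1' * (t - (x j1'.castSucc : ℝ))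
          = y j1.succ + s j1' * (t - (x j1.succ : ℝ)) := by rw [hadj]
      have h3 : y j1.succ + s j1' * (t - (x j1.succ : ℝ))
          ≤ y j1.succ + s j1 * (t - (x j1.succ : ℝ)) := by
        have h4 := sub_nonpos.mpr ht
        nlinarith
      have h5 : y j1.succ + s j1 * (t - (x j1.succ : ℝ))
          = y j1.castSucc + s j1 * (t - (x j1.castSucc : ℝ)) := by
        linear_combination - hkey j1
      linarith
  have hxle : ∀ j : Fin (N+1), x j ≤ n := fun j => by
    have h := hxmono.monotone (Fin.le_last j)
    rw [hxN] at h; exact h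
  -- covering by segments
  have hcov : ∀ i : ℕ, i ≤ n → ∃ j : Fin N, x j.castSucc ≤ i ∧ i ≤ x j.succ := by
    intro i hi
    classical
    set T := Finset.univ.filter (fun j : Fin (N+1) => x j ≤ i) with hT
    have hTne : T.Nonempty := ⟨0, by simp [hT, hx0]⟩
    set j0 := T.max' hTne with hj0
    have hj0mem : x j0 ≤ i := by
      have h := T.max'_mem hTne
      simp only [hT, Finset.mem_filter] at h
      exact h.2
    by_cases hcase : j0.val < N
    · refine ⟨⟨j0.val, hcase⟩, ?_, ?_⟩
      · have he : (⟨j0.val, hcase⟩ : Fin N).castSucc = j0 := Fin.ext rfl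
        rw [he]; exact hj0mem
      · by_contra hcon
        push_neg at hcon
        have hmem : (⟨j0.val, hcase⟩ : Fin N).succ ∈ T := by
          simp only [hT, Finset.mem_filter, Finset.mem_univ, true_and]
          exact hcon.le
        have hle := T.le_max' _ hmem
        rw [← hj0] at hle
        rw [Fin.le_def] at hle
        simp at hle
        try omega
    · have hj0last : j0 = Fin.last N := Fin.ext (by
        have := j0.isLt; simp only [Fin.val_last]; omega)
      have hieq : i = n := le_antisymm hi (by rw [← hxN, ← hj0last]; exact hj0mem)
      refine ⟨⟨N - 1, by omega⟩, ?_, ?_⟩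
      · calc x (⟨N-1, by omega⟩ : Fin N).castSucc ≤ n := hxle _
          _ = i := hieq.symm
      · have hsucc : (⟨N-1, by omega⟩ : Fin N).succ = Fin.last N := Fin.ext (by simp; omega)
        rw [hsucc, hxN, ← hieq]
  -- norm versions of f data
  have hsegnorm : ∀ j : Fin N, ∀ i : ℕ, x j.castSucc ≤ i → i ≤ x j.succ →
      ‖f.coeff i‖ ≤ (p:ℝ) ^ (-(y j.castSucc + s j * ((i:ℝ) - (x j.castSucc : ℝ)))) :=
    fun j i h1 h2 => (np_ordp_le_iff _ _).mp (hseg j i h1 h2)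
  have hglob : ∀ (j : Fin N) (k : ℕ),
      ‖f.coeff k‖ ≤ (p:ℝ) ^ (-(y j.castSucc + s j * ((k:ℝ) - (x j.castSucc : ℝ)))) := by
    intro j k
    by_cases hk : k ≤ n
    · obtain ⟨j', h1, h2⟩ := hcov k hk
      refine (hsegnorm j' k h1 h2).trans ?_
      rw [Real.rpow_le_rpow_left_iff hp1]
      apply neg_le_neg
      rcases le_total j.val j'.val with hle | hle
      · exact hA (j'.val - j.val) j j' (by omega) k (by exact_mod_cast h1)
      · exact hB (j.val - j'.val) j' j (by omega) k
          (by exact_mod_cast Nat.cast_le.mpr h2)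
    · rw [f.coeff_eq_zero_of_natDegree_lt (by omega), norm_zero]
      exact (Real.rpow_pos_of_pos hp0 _).le
  have hvnorm : ∀ j : Fin (N+1), ‖f.coeff (x j)‖ = (p:ℝ) ^ (-(y j)) :=
    fun j => (np_ordp_eq_iff _ _).mp (hvert j)
  -- g data
  have hgc0 : ((g.coeff 0).valuation : ℝ) = (r:ℝ) := by exact_mod_cast congrArg Int.cast hval0
  have hgb : ∀ i : ℕ, ‖g.coeff i‖ ≤ (p:ℝ) ^ ((r:ℝ)/d * i - r) := by
    intro i
    by_cases hi : i ≤ d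
    · have h := (np_ordp_le_iff (((g.coeff 0).valuation:ℝ) + (-(r:ℝ)/d) * i) _).mp (hgpure i hi)
      refine h.trans_eq ?_
      congr 1
      rw [hgc0]; ring
    · rw [g.coeff_eq_zero_of_natDegree_lt (by omega), norm_zero]
      exact (Real.rpow_pos_of_pos hp0 _).le
  have hgleadnorm : ‖g.coeff d‖ = 1 := by
    have h0 : ((g.coeff 0).valuation:ℝ) + (-(r:ℝ)/d) * d = 0 := by
      rw [hgc0]; field_simp; ring
    have h := (np_ordp_eq_iff 0 _).mp (by rw [hglead, h0])
    rw [h, neg_zero, Real.rpow_zero]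
  have hpowb : ∀ k m : ℕ, ‖(g^k).coeff m‖ ≤ (p:ℝ) ^ ((r:ℝ)/d * m - k * r) :=
    np_pow_coeff_le g r ((r:ℝ)/d) hgb
  have hpowlead : ∀ k : ℕ, ‖(g^k).coeff (d * k)‖ = 1 := by
    intro k
    rw [show d * k = (g^k).natDegree by rw [natDegree_pow, ← hd]; ring, coeff_natDegree,
      leadingCoeff_pow, norm_pow, show g.leadingCoeff = g.coeff d from rfl, hgleadnorm, one_pow]
  have hpowzero : ∀ k m : ℕ, d * k < m → (g^k).coeff m = 0 := fun k m h =>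
    coeff_eq_zero_of_natDegree_lt (by rw [natDegree_pow, ← hd, Nat.mul_comm k d]; exact h)
  have hcomp : ∀ m : ℕ, (f.comp g).coeff m
      = ∑ k ∈ Finset.range (n+1), f.coeff k * (g^k).coeff m := by
    intro m
    rw [show f.comp g = eval₂ C g f from rfl, eval₂_eq_sum_range, finset_sum_coeff]
    simp [coeff_C_mul]
    rfl
  have hSlope : ∀ j : Fin N,
      (y j.succ - y j.castSucc) / (((d * x j.succ : ℕ):ℝ) - ((d * x j.castSucc : ℕ):ℝ))
        = s j / d := by
    intro j
    push_cast
    rw [← mul_sub, div_mul_eq_div_div_swap, hsdef]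
  refine ⟨by simp [hx0], ?_, ?_, ?_, ?_, ?_⟩
  · show d * x (Fin.last N) = (f.comp g).natDegree
    rw [natDegree_comp, hxN, ← hn, ← hd, mul_comm]
  · intro j
    exact mul_lt_mul_of_pos_left (hxlt j) (by omega)
  · have heq : (fun j : Fin N => (y j.succ - y j.castSucc) /
        ((((fun j => d * x j) j.succ : ℕ):ℝ) - (((fun j => d * x j) j.castSucc : ℕ):ℝ)))
        = fun j => s j / d := funext fun j => hSlope j
    rw [heq]
    exact hslt.div_const hdpos
  · -- vertex values
    intro j
    show ordp p ((f.comp g).coeff (d * x j)) = ((y j : ℝ) : EReal)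
    rw [np_ordp_eq_iff, hcomp]
    have hmem : x j ∈ Finset.range (n+1) := Finset.mem_range.mpr (Nat.lt_succ_of_le (hxle j))
    rw [← Finset.add_sum_erase _ _ hmem]
    have hmain : ‖f.coeff (x j) * (g^(x j)).coeff (d * x j)‖ = (p:ℝ) ^ (-(y j)) := by
      rw [norm_mul, hvnorm j, hpowlead (x j), mul_one]
    rw [np_norm_add_of_lt, hmain]
    rw [hmain]
    apply np_ultra_sum_lt (Real.rpow_pos_of_pos hp0 _)
    intro k hk
    rw [Finset.mem_erase, Finset.mem_range] at hk
    obtain ⟨hkne, hkr⟩ := hk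
    rcases lt_trichotomy k (x j) with hlt | heq | hgt
    · rw [hpowzero k (d * x j) (by exact mul_lt_mul_of_pos_left hlt (by omega)), mul_zero,
        norm_zero]
      exact Real.rpow_pos_of_pos hp0 _
    · exact absurd heq hkne
    · have hjN : j.val < N := by
        by_contra hcon
        push_neg at hcon
        have hj : j = Fin.last N := Fin.ext (by have := j.isLt; simp only [Fin.val_last]; omega)
        rw [hj, hxN] at hgt
        omega
      set jn : Fin N := ⟨j.val, hjN⟩ with hjn
      have hc : jn.castSucc = j := Fin.ext rfl
      have hglb := hglob jn k
      rw [hc] at hglb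
      have hsr : -(r:ℝ) < s jn := (abs_lt.mp (hs jn)).1
      have hkx : (x j : ℝ) < (k:ℝ) := by exact_mod_cast hgt
      calc ‖f.coeff k * (g^k).coeff (d * x j)‖
          = ‖f.coeff k‖ * ‖(g^k).coeff (d * x j)‖ := norm_mul _ _
        _ ≤ (p:ℝ) ^ (-(y j + s jn * ((k:ℝ) - (x j : ℝ))))
            * (p:ℝ) ^ ((r:ℝ)/d * ((d * x j : ℕ):ℝ) - k * r) :=
            mul_le_mul hglb (hpowb k (d * x j)) (norm_nonneg _)
              (Real.rpow_pos_of_pos hp0 _).le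
        _ = (p:ℝ) ^ (-(y j + s jn * ((k:ℝ) - (x j:ℝ))) + ((r:ℝ)/d * ((d * x j : ℕ):ℝ) - k * r)) := by
            rw [← Real.rpow_add hp0]
        _ < (p:ℝ) ^ (-(y j)) := by
            rw [Real.rpow_lt_rpow_left_iff hp1]
            have e1 : (r:ℝ)/d * ((d * x j : ℕ):ℝ) = r * (x j : ℝ) := by
              push_cast; field_simp
            rw [e1]
            nlinarith [mul_pos (show (0:ℝ) < s jn + r by linarith)
              (show (0:ℝ) < (k:ℝ) - (x j:ℝ) by linarith)]
  · -- lower bound on every coefficient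
    intro j i h1 h2
    simp only at h1 h2 ⊢
    rw [hSlope j, np_ordp_le_iff, hcomp]
    apply np_ultra_sum_le (Real.rpow_pos_of_pos hp0 _).le
    intro k hk
    rw [Finset.mem_range] at hk
    by_cases hdk : d * k < i
    · rw [hpowzero k i hdk, mul_zero, norm_zero]
      exact (Real.rpow_pos_of_pos hp0 _).le
    · push_neg at hdk
      have hid : (i:ℝ) ≤ (d:ℝ) * (k:ℝ) := by exact_mod_cast hdk
      have hsr : -(r:ℝ) < s j := (abs_lt.mp (hs j)).1
      calc ‖f.coeff k * (g^k).coeff i‖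
          = ‖f.coeff k‖ * ‖(g^k).coeff i‖ := norm_mul _ _
        _ ≤ (p:ℝ) ^ (-(y j.castSucc + s j * ((k:ℝ) - (x j.castSucc : ℝ))))
            * (p:ℝ) ^ ((r:ℝ)/d * (i:ℝ) - k * r) :=
            mul_le_mul (hglob j k) (hpowb k i) (norm_nonneg _)
              (Real.rpow_pos_of_pos hp0 _).le
        _ = (p:ℝ) ^ (-(y j.castSucc + s j * ((k:ℝ) - (x j.castSucc:ℝ)))
              + ((r:ℝ)/d * (i:ℝ) - k * r)) := by rw [← Real.rpow_add hp0]
        _ ≤ (p:ℝ) ^ (-(y j.castSucc + s j / d * ((i:ℝ) - ((d * x j.castSucc : ℕ):ℝ)))) := by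
            rw [Real.rpow_le_rpow_left_iff hp1]
            have hdiff : (-(y j.castSucc + s j / d * ((i:ℝ) - ((d * x j.castSucc : ℕ):ℝ))))
                - (-(y j.castSucc + s j * ((k:ℝ) - (x j.castSucc:ℝ)))
                  + ((r:ℝ)/d * (i:ℝ) - k * r))
                = ((s j + r) * ((d:ℝ) * k - i)) / d := by
              push_cast
              field_simp
              ring
            have hpos : 0 ≤ ((s j + r) * ((d:ℝ) * k - i)) / d :=
              div_nonneg (mul_nonneg (by linarith) (by linarith)) hdpos.le
            linarith
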